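/- Let 𝒟 be the basic Weitzenböck derivation on ℚ[x_0, …, x_m] and, for 2 ≤ k ≤ m, let z_k = Σ_{i=0}^{k-2} (−1)^i C(k,i) x_{k-i} x_1^i x_0^{k-i-1} + (k−1)(−1)^{k+1} x_1^k. Then 𝒟(z_k) = 0, i.e. each z_k lies in the kernel of 𝒟. -/

import Mathlib

open MvPolynomial

/-- The Cayley kernel elements
`z_k = ∑_{i=0}^{k-2} (-1)^i C(k,i) x_{k-i} x_1^i x_0^{k-i-1} + (k-1)(-1)^{k+1} x_1^k`
are annihilated by the basic Weitzenböck derivation. -/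
theorem weitzenbock_cayley_kernel (m : ℕ)
    (D : Derivation ℚ (MvPolynomial (Fin (m + 1)) ℚ) (MvPolynomial (Fin (m + 1)) ℚ))
    (h0 : D (X (⟨0, by omega⟩ : Fin (m + 1))) = 0)
    (h : ∀ i : Fin (m + 1), 1 ≤ (i : ℕ) →
      D (X i) = ((i : ℕ) : ℚ) • X (⟨(i : ℕ) - 1, by have := i.isLt; omega⟩ : Fin (m + 1)))
    (k : ℕ) (hk2 : 2 ≤ k) (hkm : k ≤ m) :
    D ((∑ i ∈ (Finset.range (k - 1)).attach,
          ((-1 : ℚ) ^ i.1 * (k.choose i.1 : ℚ)) •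
            (X (⟨k - i.1, by omega⟩ : Fin (m + 1))
              * X (⟨1, by omega⟩ : Fin (m + 1)) ^ i.1
              * X (⟨0, by omega⟩ : Fin (m + 1)) ^ (k - i.1 - 1)))
        + (((k : ℚ) - 1) * (-1 : ℚ) ^ (k + 1)) • X (⟨1, by omega⟩ : Fin (m + 1)) ^ k)
      = 0 := by
  have h0m : (0:ℕ) < m + 1 := by omega
  have h1m : (1:ℕ) < m + 1 := by omega
  have hm1 : ∀ i : ℕ, k - i < m + 1 := fun i => by omega
  have hm2 : ∀ i : ℕ, k - i - 1 < m + 1 := fun i => by omega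
  have hD0 : D (X (⟨0, h0m⟩ : Fin (m+1))) = 0 := h0
  have hD1 : D (X (⟨1, h1m⟩ : Fin (m+1))) = X ⟨0, h0m⟩ := by
    have := h ⟨1, h1m⟩ le_rfl
    simpa using this
  have hDk : ∀ i : ℕ, i < k - 1 →
      D (X (⟨k - i, hm1 i⟩ : Fin (m+1))) = ((k - i : ℕ) : ℚ) • X ⟨k - i - 1, hm2 i⟩ :=
    fun i hi => h ⟨k - i, hm1 i⟩ (show 1 ≤ k - i by omega)
  set f : ℕ → MvPolynomial (Fin (m+1)) ℚ := fun i =>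
    ((-1:ℚ)^i * (k.choose i : ℚ)) •
      (X ⟨k - i, hm1 i⟩ * X ⟨1, h1m⟩ ^ i * X ⟨0, h0m⟩ ^ (k - i - 1)) with hf
  rw [show (∑ i ∈ (Finset.range (k - 1)).attach,
          ((-1 : ℚ) ^ i.1 * (k.choose i.1 : ℚ)) •
            (X (⟨k - i.1, by omega⟩ : Fin (m + 1))
              * X (⟨1, by omega⟩ : Fin (m + 1)) ^ i.1
              * X (⟨0, by omega⟩ : Fin (m + 1)) ^ (k - i.1 - 1)))
        = ∑ i ∈ (Finset.range (k-1)).attach, f i.1 from rfl]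
  rw [Finset.sum_attach, map_add, map_sum]
  have hDf : ∀ i ∈ Finset.range (k-1), D (f i) =
      (C ((-1:ℚ)^i * (k.choose i : ℚ) * ((k - i : ℕ) : ℚ)) *
        (X ⟨k - i - 1, hm2 i⟩ * X ⟨1, h1m⟩ ^ i * X ⟨0, h0m⟩ ^ (k - i - 1))
      + C ((-1:ℚ)^i * (k.choose i : ℚ) * ((i:ℕ) : ℚ)) *
        (X ⟨k - i, hm1 i⟩ * X ⟨1, h1m⟩ ^ (i-1) * X ⟨0, h0m⟩ ^ (k - i))) := by
    intro i hi
    rw [Finset.mem_range] at hi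
    show D (((-1:ℚ)^i * (k.choose i : ℚ)) •
      (X ⟨k - i, hm1 i⟩ * X ⟨1, h1m⟩ ^ i * X ⟨0, h0m⟩ ^ (k - i - 1))) = _
    rw [Derivation.map_smul, Derivation.leibniz, Derivation.leibniz, Derivation.leibniz_pow,
      Derivation.leibniz_pow, hD0, hD1, hDk i hi]
    generalize (X (⟨k - i, hm1 i⟩ : Fin (m+1)) : MvPolynomial (Fin (m+1)) ℚ) = A
    generalize (X (⟨k - i - 1, hm2 i⟩ : Fin (m+1)) : MvPolynomial (Fin (m+1)) ℚ) = B
    obtain ⟨n, hn⟩ : ∃ n, k - i = n + 1 := ⟨k - i - 1, by omega⟩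
    rw [hn]
    simp only [Nat.add_sub_cancel, smul_zero, smul_eq_mul, mul_zero, zero_add,
      MvPolynomial.smul_eq_C_mul, nsmul_eq_mul, C_mul, map_natCast, map_pow, map_neg, map_one]
    push_cast
    ring
  rw [Finset.sum_congr rfl hDf, Finset.sum_add_distrib]
  have hk1 : k - 1 = (k - 2) + 1 := by omega
  rw [hk1, Finset.sum_range_succ, Finset.sum_range_succ']
  have hG0 : C ((-1:ℚ)^0 * (k.choose 0 : ℚ) * ((0:ℕ) : ℚ)) *
      (X (⟨k - 0, hm1 0⟩ : Fin (m+1)) * X (⟨1, h1m⟩ : Fin (m+1)) ^ (0-1)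
        * X (⟨0, h0m⟩ : Fin (m+1)) ^ (k - 0)) = 0 := by
    simp
  have hFG : (∑ j ∈ Finset.range (k-2), C ((-1:ℚ)^j * (k.choose j : ℚ) * ((k - j : ℕ) : ℚ)) *
        (X (⟨k - j - 1, hm2 j⟩ : Fin (m+1)) * X (⟨1, h1m⟩ : Fin (m+1)) ^ j
          * X (⟨0, h0m⟩ : Fin (m+1)) ^ (k - j - 1)))
      + (∑ j ∈ Finset.range (k-2), C ((-1:ℚ)^(j+1) * (k.choose (j+1) : ℚ) * ((j+1 : ℕ) : ℚ)) *
        (X (⟨k - (j+1), hm1 (j+1)⟩ : Fin (m+1)) * X (⟨1, h1m⟩ : Fin (m+1)) ^ ((j+1)-1)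
          * X (⟨0, h0m⟩ : Fin (m+1)) ^ (k - (j+1))))
      = (0 : MvPolynomial (Fin (m+1)) ℚ) := by
    rw [← Finset.sum_add_distrib]
    apply Finset.sum_eq_zero
    intro j hj
    rw [Finset.mem_range] at hj
    show C ((-1:ℚ)^j * (k.choose j : ℚ) * ((k - j : ℕ) : ℚ)) *
        (X (⟨k - j - 1, hm2 j⟩ : Fin (m+1)) * X (⟨1, h1m⟩ : Fin (m+1)) ^ j
          * X (⟨0, h0m⟩ : Fin (m+1)) ^ (k - j - 1))
      + C ((-1:ℚ)^(j+1) * (k.choose (j+1) : ℚ) * ((j+1 : ℕ) : ℚ)) *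
        (X (⟨k - j - 1, hm2 j⟩ : Fin (m+1)) * X (⟨1, h1m⟩ : Fin (m+1)) ^ j
          * X (⟨0, h0m⟩ : Fin (m+1)) ^ (k - j - 1)) = 0
    rw [← add_mul, ← C_add]
    have hch : ((k.choose (j+1)) * (j+1) : ℕ) = (k.choose j) * (k - j) :=
      Nat.choose_succ_right_eq k j
    have hchQ : (k.choose (j+1) : ℚ) * ((j+1:ℕ):ℚ) = (k.choose j : ℚ) * ((k - j : ℕ) : ℚ) := by
      exact_mod_cast congrArg (Nat.cast : ℕ → ℚ) hch
    have hz : (-1:ℚ)^j * (k.choose j : ℚ) * ((k - j : ℕ) : ℚ)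
        + (-1:ℚ)^(j+1) * (k.choose (j+1) : ℚ) * ((j+1 : ℕ) : ℚ) = 0 := by
      push_cast at hchQ ⊢
      linear_combination (-(-1:ℚ)^j) * hchQ
    rw [hz, map_zero, zero_mul]
  have hcoef : (-1:ℚ)^(k-2) * (k.choose (k-2) : ℚ) * 2
      + ((k:ℚ)-1) * (-1:ℚ)^(k+1) * (k:ℚ) = 0 := by
    obtain ⟨j, rfl⟩ : ∃ j, k = j + 2 := ⟨k - 2, by omega⟩
    simp only [Nat.add_sub_cancel]
    have hsymm : (j+2).choose j = (j+2).choose 2 := by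
      have := Nat.choose_symm (n := j+2) (k := 2) (by omega)
      simpa using this
    have h2 : ((j+2).choose 2 * 2 : ℕ) = (j+2) * (j+1) := by
      have := Nat.choose_succ_right_eq (j+2) 1
      simp [Nat.choose_one_right] at this
      omega
    have h2Q : (((j+2).choose 2 : ℚ)) * 2 = ((j:ℚ)+2) * ((j:ℚ)+1) := by
      exact_mod_cast congrArg (Nat.cast : ℕ → ℚ) h2
    rw [hsymm]
    push_cast
    linear_combination ((-1:ℚ)^j) * h2Q
  have hlast : D ((((k:ℚ)-1) * (-1:ℚ)^(k+1)) • X (⟨1, h1m⟩ : Fin (m+1)) ^ k)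
      = C (((k:ℚ)-1) * (-1:ℚ)^(k+1) * (k:ℚ)) *
          (X (⟨1, h1m⟩ : Fin (m+1)) ^ (k-1) * X ⟨0, h0m⟩) := by
    rw [Derivation.map_smul, Derivation.leibniz_pow, hD1, smul_eq_mul,
      ← Nat.cast_smul_eq_nsmul ℚ, smul_smul, MvPolynomial.smul_eq_C_mul]
  have hfinal : C ((-1:ℚ)^(k-2) * (k.choose (k-2) : ℚ) * ((k - (k-2) : ℕ) : ℚ)) *
        (X (⟨k - (k-2) - 1, hm2 (k-2)⟩ : Fin (m+1)) * X (⟨1, h1m⟩ : Fin (m+1)) ^ (k-2)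
          * X (⟨0, h0m⟩ : Fin (m+1)) ^ (k - (k-2) - 1))
      + D ((((k:ℚ)-1) * (-1:ℚ)^(k+1)) • X (⟨1, h1m⟩ : Fin (m+1)) ^ k) = 0 := by
    rw [hlast]
    have hX : (X (⟨k - (k-2) - 1, hm2 (k-2)⟩ : Fin (m+1)) : MvPolynomial (Fin (m+1)) ℚ)
        = X ⟨1, h1m⟩ := by
      congr 1
      exact Fin.ext (show k - (k-2) - 1 = 1 by omega)
    rw [hX, show k - (k-2) - 1 = 1 from by omega,
      show ((k - (k-2) : ℕ) : ℚ) = 2 from by norm_num [show k - (k-2) = 2 from by omega],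
      pow_one, show k - 1 = (k-2)+1 from by omega]
    have hC : (C ((-1:ℚ)^(k-2) * (k.choose (k-2) : ℚ) * 2) : MvPolynomial (Fin (m+1)) ℚ)
        = - C (((k:ℚ)-1) * (-1:ℚ)^(k+1) * (k:ℚ)) := by
      rw [show (-1:ℚ)^(k-2) * (k.choose (k-2) : ℚ) * 2
          = -(((k:ℚ)-1) * (-1:ℚ)^(k+1) * (k:ℚ)) from by linear_combination hcoef, map_neg]
    rw [hC]
    ring
  rw [hG0, add_zero]
  linear_combination hFG + hfinal
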